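/- ∫_0^{1/2} ∫_{-ξ₁/√3}^{ξ₁/√3} dξ₂ dξ₁ / (1 - ξ₁² - ξ₂²) = ∫_0^{π/6} log( sin(θ + π/3)/sin(π/3 - θ) ) dθ, and this value equals (1/2)·Л(π/3), where Л(θ) = -∫_0^θ log|2 sin t| dt is the Lobachevsky function. -/

import Mathlib

open MeasureTheory Real intervalIntegral

/-- The Lobachevsky function Л(θ) = -∫₀^θ log|2 sin t| dt. -/
noncomputable def lob (θ : ℝ) : ℝ := -∫ t in (0 : ℝ)..θ, Real.log |2 * Real.sin t|

/-- abbreviation -/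
noncomputable def LL (t : ℝ) : ℝ := Real.log |2 * Real.sin t|

lemma log_int01 : IntervalIntegrable Real.log volume 0 1 := by
  rw [intervalIntegrable_iff_integrableOn_Ioc_of_le zero_le_one]
  have h : IntegrableOn (fun x : ℝ => -Real.log x) (Set.Ioc 0 1) volume := by
    apply intervalIntegral.integrableOn_deriv_of_nonneg
      (g := fun x => x + Real.negMulLog x)
    · exact (continuous_id.add Real.continuous_negMulLog).continuousOn
    · intro x hx
      have h1 := (hasDerivAt_id x).add (Real.hasDerivAt_negMulLog (ne_of_gt hx.1))
      refine h1.congr_deriv ?_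
      ring
    · intro x hx
      simp only [Left.nonneg_neg_iff] at *
      exact Real.log_nonpos hx.1.le hx.2.le
  have h2 := h.neg
  have : (-fun x : ℝ => -Real.log x) = Real.log := by funext x; simp
  rwa [this] at h2

lemma L_intble {b : ℝ} (hb0 : 0 < b) (hb : b ≤ π / 2) :
    IntervalIntegrable LL volume 0 b := by
  rw [intervalIntegrable_iff_integrableOn_Ioc_of_le hb0.le]
  have h1 : IntegrableOn Real.log (Set.Ioc 0 b) volume := by
    have h0 : (0:ℝ) ∉ Set.uIcc 1 b := by
      rw [Set.mem_uIcc]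
      push_neg
      constructor <;> intro h <;> linarith [h, hb0]
    have := log_int01.trans (intervalIntegrable_log h0)
    rwa [intervalIntegrable_iff_integrableOn_Ioc_of_le hb0.le] at this
  have h2 : IntegrableOn (fun t => Real.log (2 * Real.sin t / t)) (Set.Ioc 0 b) volume := by
    have hmeas : AEStronglyMeasurable (fun t => Real.log (2 * Real.sin t / t))
        (volume.restrict (Set.Ioc 0 b)) := by
      apply Measurable.aestronglyMeasurable
      exact Real.measurable_log.comp
        ((continuous_const.mul Real.continuous_sin).measurable.div measurable_id)
    apply Integrable.mono' (g := fun _ => Real.log 2)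
      (integrableOn_const measure_Ioc_lt_top.ne) hmeas
    filter_upwards [ae_restrict_mem measurableSet_Ioc] with t ht
    have ht0 : 0 < t := ht.1
    have htb : t ≤ π / 2 := ht.2.trans hb
    have hsin : 2 / π * t ≤ Real.sin t := Real.mul_le_sin ht0.le htb
    have hpi : 0 < π := Real.pi_pos
    have hlow : 4 / π ≤ 2 * Real.sin t / t := by
      rw [le_div_iff₀ ht0]
      calc 4 / π * t = 2 * (2 / π * t) := by ring
      _ ≤ 2 * Real.sin t := by linarith
    have hhigh : 2 * Real.sin t / t ≤ 2 := by
      rw [div_le_iff₀ ht0]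
      have := Real.sin_le ht0.le
      linarith
    have h4pi : (1:ℝ) ≤ 4 / π := by
      rw [le_div_iff₀ hpi]
      linarith [Real.pi_le_four]
    have hr1 : (1:ℝ) ≤ 2 * Real.sin t / t := h4pi.trans hlow
    rw [Real.norm_eq_abs, abs_of_nonneg (Real.log_nonneg hr1)]
    exact Real.log_le_log (by linarith) hhigh
  have h3 : IntegrableOn (fun t => Real.log t + Real.log (2 * Real.sin t / t))
      (Set.Ioc 0 b) volume := h1.add h2
  apply IntegrableOn.congr_fun h3 ?_ measurableSet_Ioc
  intro t ht
  have ht0 : 0 < t := ht.1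
  have hsinpos : 0 < Real.sin t := Real.sin_pos_of_pos_of_lt_pi ht0
    (lt_of_le_of_lt (ht.2.trans hb) (by linarith [Real.pi_pos]))
  have hne : (2 * Real.sin t / t) ≠ 0 := by positivity
  show Real.log t + Real.log (2 * Real.sin t / t) = LL t
  rw [LL, abs_of_pos (by positivity), ← Real.log_mul (ne_of_gt ht0) hne]
  congr 1
  field_simp

lemma L_comp_contOn {f : ℝ → ℝ} (hf : Continuous f) {s : Set ℝ}
    (h : ∀ t ∈ s, Real.sin (f t) ≠ 0) : ContinuousOn (fun t => LL (f t)) s := by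
  show ContinuousOn (fun t => Real.log |2 * Real.sin (f t)|) s
  apply ContinuousOn.log
  · exact ((continuous_const.mul (Real.continuous_sin.comp hf)).abs).continuousOn
  · intro t ht
    simp only [abs_ne_zero]
    exact mul_ne_zero two_ne_zero (h t ht)

lemma part2 : (∫ θ in Set.Ioo (0:ℝ) (π/6),
      Real.log (Real.sin (θ + π/3) / Real.sin (π/3 - θ))) = (1/2) * lob (π/3) := by
  have hπ : 0 < π := Real.pi_pos
  have h6 : (0:ℝ) ≤ π/6 := by linarith
  -- convert to interval integral
  rw [← integral_Ioc_eq_integral_Ioo, ← intervalIntegral.integral_of_le h6]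
  -- integrand equality
  have e1 : (∫ θ in (0:ℝ)..(π/6), Real.log (Real.sin (θ + π/3) / Real.sin (π/3 - θ)))
      = ∫ θ in (0:ℝ)..(π/6), (LL (θ + π/3) - LL (π/3 - θ)) := by
    apply intervalIntegral.integral_congr
    intro θ hθ
    rw [Set.uIcc_of_le h6] at hθ
    obtain ⟨h0, h1⟩ := hθ
    have hs1 : 0 < Real.sin (θ + π/3) :=
      Real.sin_pos_of_pos_of_lt_pi (by linarith) (by linarith)
    have hs2 : 0 < Real.sin (π/3 - θ) :=
      Real.sin_pos_of_pos_of_lt_pi (by linarith) (by linarith)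
    show Real.log (Real.sin (θ + π/3) / Real.sin (π/3 - θ))
        = Real.log |2 * Real.sin (θ + π/3)| - Real.log |2 * Real.sin (π/3 - θ)|
    rw [abs_of_pos (by positivity), abs_of_pos (by positivity),
      Real.log_div hs1.ne' hs2.ne', Real.log_mul two_ne_zero hs1.ne',
      Real.log_mul two_ne_zero hs2.ne']
    ring
  have i1 : IntervalIntegrable (fun θ => LL (θ + π/3)) volume 0 (π/6) := by
    apply ContinuousOn.intervalIntegrable
    apply L_comp_contOn (by continuity)
    intro t ht
    rw [Set.uIcc_of_le h6] at ht
    exact (Real.sin_pos_of_pos_of_lt_pi (by linarith [ht.1]) (by linarith [ht.2])).ne'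
  have i2 : IntervalIntegrable (fun θ => LL (π/3 - θ)) volume 0 (π/6) := by
    apply ContinuousOn.intervalIntegrable
    apply L_comp_contOn (by continuity)
    intro t ht
    rw [Set.uIcc_of_le h6] at ht
    exact (Real.sin_pos_of_pos_of_lt_pi (by linarith [ht.2]) (by linarith [ht.1])).ne'
  have e3 : (∫ θ in (0:ℝ)..(π/6), LL (θ + π/3)) = ∫ t in (π/3)..(π/2), LL t := by
    rw [intervalIntegral.integral_comp_add_right LL (π/3)]
    congr 1 <;> ring
  have e4 : (∫ θ in (0:ℝ)..(π/6), LL (π/3 - θ)) = ∫ t in (π/6)..(π/3), LL t := by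
    rw [intervalIntegral.integral_comp_sub_left LL (π/3)]
    congr 1 <;> ring
  have cB : IntervalIntegrable LL volume (π/6) (π/3) := by
    apply ContinuousOn.intervalIntegrable
    apply L_comp_contOn continuous_id'
    intro t ht
    rw [Set.uIcc_of_le (by linarith)] at ht
    exact (Real.sin_pos_of_pos_of_lt_pi (by linarith [ht.1]) (by linarith [ht.2])).ne'
  have cC : IntervalIntegrable LL volume (π/3) (π/2) := by
    apply ContinuousOn.intervalIntegrable
    apply L_comp_contOn continuous_id'
    intro t ht
    rw [Set.uIcc_of_le (by linarith)] at ht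
    exact (Real.sin_pos_of_pos_of_lt_pi (by linarith [ht.1]) (by linarith [ht.2])).ne'
  have e5 : (∫ t in (0:ℝ)..(π/6), LL t) + (∫ t in (π/6)..(π/3), LL t)
      = ∫ t in (0:ℝ)..(π/3), LL t :=
    intervalIntegral.integral_add_adjacent_intervals (L_intble (by linarith) (by linarith)) cB
  -- duplication
  have d1 : (∫ θ in (0:ℝ)..(π/6), LL (2*θ)) = (1/2) * ∫ t in (0:ℝ)..(π/3), LL t := by
    rw [intervalIntegral.integral_comp_mul_left LL two_ne_zero]
    rw [smul_eq_mul]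
    norm_num
    congr 1
    ring
  have d2 : (∫ θ in (0:ℝ)..(π/6), LL (2*θ))
      = ∫ θ in (0:ℝ)..(π/6), (LL θ + Real.log |2 * Real.cos θ|) := by
    apply intervalIntegral.integral_congr_ae
    apply MeasureTheory.ae_of_all
    intro θ hθ
    rw [Set.uIoc_of_le h6] at hθ
    have hs : 0 < Real.sin θ := Real.sin_pos_of_pos_of_lt_pi hθ.1 (by linarith [hθ.2])
    have hc : 0 < Real.cos θ := Real.cos_pos_of_mem_Ioo
      ⟨by linarith [hθ.1], by linarith [hθ.2]⟩
    show Real.log |2 * Real.sin (2*θ)| = Real.log |2 * Real.sin θ| + Real.log |2 * Real.cos θ|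
    rw [Real.sin_two_mul]
    have : (2 : ℝ) * (2 * Real.sin θ * Real.cos θ) = (2 * Real.sin θ) * (2 * Real.cos θ) := by
      ring
    rw [this, abs_mul, Real.log_mul (by positivity) (by positivity)]
  have iC : IntervalIntegrable (fun θ => Real.log |2 * Real.cos θ|) volume 0 (π/6) := by
    apply ContinuousOn.intervalIntegrable
    apply ContinuousOn.log ((continuous_const.mul Real.continuous_cos).abs).continuousOn
    intro t ht
    rw [Set.uIcc_of_le h6] at ht
    have : 0 < Real.cos t := Real.cos_pos_of_mem_Ioo ⟨by linarith [ht.1], by linarith [ht.2]⟩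
    exact abs_ne_zero.2 (mul_ne_zero two_ne_zero this.ne')
  have d3 : (∫ θ in (0:ℝ)..(π/6), (LL θ + Real.log |2 * Real.cos θ|))
      = (∫ θ in (0:ℝ)..(π/6), LL θ) + ∫ θ in (0:ℝ)..(π/6), Real.log |2 * Real.cos θ| :=
    intervalIntegral.integral_add (L_intble (by linarith) (by linarith)) iC
  have d4 : (∫ θ in (0:ℝ)..(π/6), Real.log |2 * Real.cos θ|) = ∫ t in (π/3)..(π/2), LL t := by
    have hfun : ∀ θ : ℝ, Real.log |2 * Real.cos θ| = LL (π/2 - θ) := by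
      intro θ
      show _ = Real.log |2 * Real.sin (π/2 - θ)|
      rw [Real.sin_pi_div_two_sub]
    simp_rw [hfun]
    rw [intervalIntegral.integral_comp_sub_left LL (π/2)]
    congr 1 <;> ring
  -- assemble
  have lobdef : lob (π/3) = -∫ t in (0:ℝ)..(π/3), LL t := rfl
  rw [e1, intervalIntegral.integral_sub i1 i2, e3, e4, lobdef]
  have key : (1/2) * (∫ t in (0:ℝ)..(π/3), LL t)
      = (∫ t in (0:ℝ)..(π/6), LL t) + ∫ t in (π/3)..(π/2), LL t := by
    rw [← d1, d2, d3, d4]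
  linarith [e5, key]

noncomputable def gg (x : ℝ) : ℝ :=
  (Real.sqrt (1 - x^2))⁻¹ *
    Real.log ((Real.sqrt (1 - x^2) + x / Real.sqrt 3) / (Real.sqrt (1 - x^2) - x / Real.sqrt 3))

lemma inner_eval {x : ℝ} (hx : x ∈ Set.Ioo (0:ℝ) (1/2)) :
    (∫ y in Set.Ioo (-(x / Real.sqrt 3)) (x / Real.sqrt 3), (1 - x^2 - y^2)⁻¹) = gg x := by
  obtain ⟨hx0, hx1⟩ := hx
  set c := Real.sqrt (1 - x^2) with hc
  set a := x / Real.sqrt 3 with ha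
  have hs3 : (0:ℝ) < Real.sqrt 3 := Real.sqrt_pos.2 (by norm_num)
  have hs3' : (1:ℝ) ≤ Real.sqrt 3 := by
    rw [show (1:ℝ) = Real.sqrt 1 by simp]
    exact Real.sqrt_le_sqrt (by norm_num)
  have ha0 : 0 < a := div_pos hx0 hs3
  have hax : a ≤ x := by
    rw [ha, div_le_iff₀ hs3]
    nlinarith
  have hcsq : c^2 = 1 - x^2 := Real.sq_sqrt (by nlinarith)
  have hc2 : 1/2 < c := by
    rw [hc]
    rw [show (1:ℝ)/2 = Real.sqrt (1/4) by
      rw [show (1:ℝ)/4 = (1/2)^2 by norm_num, Real.sqrt_sq]; norm_num]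
    apply Real.sqrt_lt_sqrt (by norm_num)
    nlinarith
  have hac : a < c := by linarith
  have hca : 0 < c - a := by linarith
  have hca' : 0 < c + a := by linarith
  have hc0 : 0 < c := by linarith
  rw [← integral_Ioc_eq_integral_Ioo, ← intervalIntegral.integral_of_le (by linarith : -a ≤ a)]
  have hFTC := intervalIntegral.integral_eq_sub_of_hasDerivAt
    (f := fun y => (2*c)⁻¹ * (Real.log (c + y) - Real.log (c - y)))
    (f' := fun y => (1 - x^2 - y^2)⁻¹) (a := -a) (b := a) ?_ ?_
  · rw [hFTC]
    rw [gg, ← hc]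
    have e1 : Real.log ((c + a) / (c - a)) = Real.log (c + a) - Real.log (c - a) :=
      Real.log_div hca'.ne' hca.ne'
    rw [e1]
    have : c + -a = c - a := by ring
    rw [this]
    have : c - -a = c + a := by ring
    rw [this]
    field_simp
    ring
  · intro y hy
    rw [Set.uIcc_of_le (by linarith : -a ≤ a)] at hy
    obtain ⟨hy1, hy2⟩ := hy
    have hcy1 : 0 < c + y := by linarith
    have hcy2 : 0 < c - y := by linarith
    have d1 : HasDerivAt (fun y => Real.log (c + y)) (c + y)⁻¹ y := by
      have := ((hasDerivAt_id y).const_add c).log hcy1.ne'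
      simpa using this
    have d2 : HasDerivAt (fun y => Real.log (c - y)) (-(c - y)⁻¹) y := by
      have h := ((hasDerivAt_id y).const_sub c).log hcy2.ne'
      have : (0 - 1) / (c - y) = -(c - y)⁻¹ := by
        field_simp
        norm_num
      rw [← this]
      simpa using h
    have := ((d1.sub d2).const_mul ((2*c)⁻¹))
    refine this.congr_deriv (Eq.symm ?_)
    have hyy : 0 < 1 - x^2 - y^2 := by nlinarith
    field_simp
    nlinarith [hcsq]
  · apply ContinuousOn.intervalIntegrable
    apply ContinuousOn.inv₀
    · fun_prop
    · intro y hy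
      rw [Set.uIcc_of_le (by linarith : -a ≤ a)] at hy
      obtain ⟨hy1, hy2⟩ := hy
      nlinarith

lemma gg_contOn : ContinuousOn gg (Set.Icc (0:ℝ) (1/2)) := by
  have hs3 : (0:ℝ) < Real.sqrt 3 := Real.sqrt_pos.2 (by norm_num)
  have hs3' : (1:ℝ) ≤ Real.sqrt 3 := by
    rw [show (1:ℝ) = Real.sqrt 1 by simp]
    exact Real.sqrt_le_sqrt (by norm_num)
  have key : ∀ x ∈ Set.Icc (0:ℝ) (1/2),
      x / Real.sqrt 3 < Real.sqrt (1 - x^2) ∧ 0 < Real.sqrt (1 - x^2) := by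
    intro x hx
    obtain ⟨h0, h1⟩ := hx
    have hax : x / Real.sqrt 3 ≤ x / 1 := by
      apply div_le_div_of_nonneg_left h0 ?_ hs3'
      · norm_num
    rw [div_one] at hax
    have hc : Real.sqrt (3/4) ≤ Real.sqrt (1 - x^2) := Real.sqrt_le_sqrt (by nlinarith)
    have h34 : Real.sqrt (3/4) > 0.6 := by
      rw [show (0.6:ℝ) = Real.sqrt (0.36) by
        rw [show (0.36:ℝ) = 0.6^2 by norm_num, Real.sqrt_sq]; norm_num]
      apply Real.sqrt_lt_sqrt <;> norm_num
    constructor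
    · calc x / Real.sqrt 3 ≤ x := hax
      _ ≤ 1/2 := h1
      _ < Real.sqrt (1 - x^2) := by linarith
    · linarith
  have hcont_sqrt : ContinuousOn (fun x : ℝ => Real.sqrt (1 - x^2)) (Set.Icc (0:ℝ) (1/2)) := by
    fun_prop
  apply ContinuousOn.mul
  · apply ContinuousOn.inv₀ hcont_sqrt
    intro x hx
    exact (key x hx).2.ne'
  · apply ContinuousOn.log
    · apply ContinuousOn.div
      · fun_prop
      · fun_prop
      · intro x hx
        have := key x hx
        linarith [this.1]
    · intro x hx
      obtain ⟨hlt, hpos⟩ := key x hx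
      have h0 : 0 ≤ x / Real.sqrt 3 := div_nonneg hx.1 hs3.le
      exact (div_pos (by linarith) (by linarith)).ne'

lemma part1 :
    (∫ x in Set.Ioo (0 : ℝ) (1 / 2),
        ∫ y in Set.Ioo (-(x / Real.sqrt 3)) (x / Real.sqrt 3), (1 - x ^ 2 - y ^ 2)⁻¹) =
      ∫ θ in Set.Ioo (0 : ℝ) (π / 6),
        Real.log (Real.sin (θ + π / 3) / Real.sin (π / 3 - θ)) := by
  have hπ : 0 < π := Real.pi_pos
  have h6 : (0:ℝ) ≤ π/6 := by linarith
  have step1 : (∫ x in Set.Ioo (0 : ℝ) (1 / 2),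
      ∫ y in Set.Ioo (-(x / Real.sqrt 3)) (x / Real.sqrt 3), (1 - x ^ 2 - y ^ 2)⁻¹)
      = ∫ x in Set.Ioo (0:ℝ) (1/2), gg x := by
    apply MeasureTheory.setIntegral_congr_fun measurableSet_Ioo
    intro x hx
    exact inner_eval hx
  -- substitution x = sin θ
  have himg : Real.sin '' (Set.uIcc (0:ℝ) (π/6)) ⊆ Set.Icc (0:ℝ) (1/2) := by
    rw [Set.uIcc_of_le h6]
    rintro _ ⟨θ, hθ, rfl⟩
    obtain ⟨h0, h1⟩ := hθ
    constructor
    · exact Real.sin_nonneg_of_nonneg_of_le_pi h0 (by linarith)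
    · rw [← Real.sin_pi_div_six]
      apply Real.strictMonoOn_sin.monotoneOn ⟨by linarith, by linarith⟩
        ⟨by linarith, by linarith⟩ h1
  have hsub := intervalIntegral.integral_comp_smul_deriv'' (f := Real.sin) (f' := Real.cos)
    (g := gg) (a := 0) (b := π/6)
    Real.continuous_sin.continuousOn
    (fun θ _ => (Real.hasDerivAt_sin θ).hasDerivWithinAt)
    Real.continuous_cos.continuousOn
    (gg_contOn.mono himg)
  rw [Real.sin_zero, Real.sin_pi_div_six] at hsub
  -- pointwise identity on [0, π/6]
  have step3 : (∫ θ in (0:ℝ)..(π/6), Real.cos θ • (gg ∘ Real.sin) θ)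
      = ∫ θ in (0:ℝ)..(π/6), Real.log (Real.sin (θ + π / 3) / Real.sin (π / 3 - θ)) := by
    apply intervalIntegral.integral_congr
    intro θ hθ
    rw [Set.uIcc_of_le h6] at hθ
    obtain ⟨h0, h1⟩ := hθ
    have hcos : 0 < Real.cos θ := Real.cos_pos_of_mem_Ioo ⟨by linarith, by linarith⟩
    have hsq : Real.sqrt (1 - Real.sin θ ^ 2) = Real.cos θ := by
      rw [show 1 - Real.sin θ ^ 2 = Real.cos θ ^ 2 by
        have := Real.sin_sq_add_cos_sq θ; linarith]
      exact Real.sqrt_sq hcos.le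
    show Real.cos θ • gg (Real.sin θ) = _
    rw [smul_eq_mul, gg, hsq]
    have hs3 : (0:ℝ) < Real.sqrt 3 := Real.sqrt_pos.2 (by norm_num)
    have e1 : Real.cos θ + Real.sin θ / Real.sqrt 3
        = 2 / Real.sqrt 3 * Real.sin (θ + π/3) := by
      rw [Real.sin_add, Real.sin_pi_div_three, Real.cos_pi_div_three]
      field_simp
      ring
    have e2 : Real.cos θ - Real.sin θ / Real.sqrt 3
        = 2 / Real.sqrt 3 * Real.sin (π/3 - θ) := by
      rw [Real.sin_sub, Real.sin_pi_div_three, Real.cos_pi_div_three]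
      field_simp
    rw [e1, e2, mul_div_mul_left _ _ (by positivity : (2:ℝ) / Real.sqrt 3 ≠ 0),
      ← mul_assoc, mul_inv_cancel₀ hcos.ne', one_mul]
  rw [step1, ← integral_Ioc_eq_integral_Ioo,
    ← intervalIntegral.integral_of_le (by norm_num : (0:ℝ) ≤ 1/2), ← hsub, step3,
    intervalIntegral.integral_of_le h6, integral_Ioc_eq_integral_Ioo]


/-- ∫₀^{1/2} ∫_{-ξ₁/√3}^{ξ₁/√3} dξ₂dξ₁/(1-ξ₁²-ξ₂²)
= ∫₀^{π/6} log( sin(θ+π/3)/sin(π/3-θ) ) dθ, and this value equals (1/2)Л(π/3). -/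
theorem stmt12 :
    ((∫ x in Set.Ioo (0 : ℝ) (1 / 2),
        ∫ y in Set.Ioo (-(x / Real.sqrt 3)) (x / Real.sqrt 3), (1 - x ^ 2 - y ^ 2)⁻¹) =
      ∫ θ in Set.Ioo (0 : ℝ) (π / 6),
        Real.log (Real.sin (θ + π / 3) / Real.sin (π / 3 - θ))) ∧
    (∫ θ in Set.Ioo (0 : ℝ) (π / 6),
        Real.log (Real.sin (θ + π / 3) / Real.sin (π / 3 - θ))) =
      (1 / 2) * lob (π / 3) := by
  exact ⟨part1, part2⟩
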